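/- Let n ≥ 6 be even, S = {a, a^{-1}, ab, a^{n/2+1}b}, Γ = Cay(D_{2n}, S), and A = Aut(Γ). Then the stabilizer A_1 of the identity vertex acts faithfully on S, has order 4, and equals Aut(D_{2n}, S) = ⟨σ_{1,n/2}, σ_{-1,2}⟩; consequently R(D_{2n}) is normal in Aut(Γ). -/

import Mathlib

open DihedralGroup

/-- The automorphism group of the Cayley (di)graph `Cay(G,S)`, as a subgroup of `Sym(G)`. -/
def cayleyAut (G : Type*) [Group G] (S : Set G) : Subgroup (Equiv.Perm G) where
  carrier := {f | ∀ x y : G, y * x⁻¹ ∈ S ↔ f y * (f x)⁻¹ ∈ S}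
  one_mem' := by intro x y; rfl
  mul_mem' := by
    intro f g hf hg x y
    exact (hg x y).trans (hf (g x) (g y))
  inv_mem' := by
    intro f hf x y
    have h := hf (f⁻¹ x) (f⁻¹ y)
    simpa using h.symm

/-- The right regular representation of `G` in `Sym(G)`, as a homomorphism. -/
def rightRegHom (G : Type*) [Group G] : G →* Equiv.Perm G where
  toFun g := Equiv.mulRight g⁻¹
  map_one' := by ext x; simp
  map_mul' a b := by ext x; simp [mul_assoc]

/-- The subgroup `R(G) ≤ Sym(G)` of all right translations. -/
def rightRegRep (G : Type*) [Group G] : Subgroup (Equiv.Perm G) := (rightRegHom G).range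

/-- `S = {a, a⁻¹, ab, a^{n/2+1}b}`. -/
def evenS (n : ℕ) : Set (DihedralGroup n) :=
  {DihedralGroup.r 1, (DihedralGroup.r 1)⁻¹,
    DihedralGroup.r 1 * DihedralGroup.sr 0,
    DihedralGroup.r (((n / 2 : ℕ) : ZMod n) + 1) * DihedralGroup.sr 0}

/-- The stabilizer `A₁` of the identity vertex in `A = Aut(Cay(D_{2n}, S))`. -/
def vertexStab (n : ℕ) : Subgroup (Equiv.Perm (DihedralGroup n)) :=
  cayleyAut (DihedralGroup n) (evenS n) ⊓
    MulAction.stabilizer (Equiv.Perm (DihedralGroup n)) (1 : DihedralGroup n)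

namespace CDAux

variable {n : ℕ}

def M (n : ℕ) : ZMod n := ((n / 2 : ℕ) : ZMod n)

@[simp] lemma inv_r (i : ZMod n) : (r i : DihedralGroup n)⁻¹ = r (-i) := rfl
@[simp] lemma inv_sr (i : ZMod n) : (sr i : DihedralGroup n)⁻¹ = sr i := rfl

structure Facts (n : ℕ) : Prop where
  hNZ : n ≠ 0
  hMM : M n + M n = 0
  hM0 : M n ≠ 0
  hM2 : M n ≠ 2
  hM2' : M n + 2 ≠ 0
  h2 : (2 : ZMod n) ≠ 0
  h4 : (4 : ZMod n) ≠ 0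

lemma facts (hn : 6 ≤ n) (heven : Even n) : Facts n := by
  obtain ⟨m, hm⟩ := heven
  have hm3 : 3 ≤ m := by omega
  have hnm : n / 2 = m := by omega
  have hzero : ∀ a : ℕ, 0 < a → a < n → ((a : ZMod n) ≠ 0) := by
    intro a ha han h
    rw [ZMod.natCast_eq_zero_iff] at h
    have := Nat.le_of_dvd ha h
    omega
  have hinj : ∀ a b : ℕ, a < n → b < n → ((a : ZMod n) = (b : ZMod n)) → a = b := by
    intro a b ha hb h
    have := congrArg ZMod.val h
    rwa [ZMod.val_cast_of_lt ha, ZMod.val_cast_of_lt hb] at this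
  have hMcast : M n = ((m : ℕ) : ZMod n) := by rw [M, hnm]
  constructor
  · omega
  · rw [hMcast, ← Nat.cast_add, ← hm, ZMod.natCast_self]
  · rw [hMcast]; exact hzero m (by omega) (by omega)
  · rw [hMcast]
    intro h
    have : ((m : ℕ) : ZMod n) = ((2 : ℕ) : ZMod n) := by rw [h]; norm_num
    have := hinj m 2 (by omega) (by omega) this
    omega
  · rw [hMcast]
    intro h
    have : (((m + 2 : ℕ)) : ZMod n) = 0 := by push_cast; exact h
    exact hzero (m + 2) (by omega) (by omega) this
  · intro h
    have : (((2 : ℕ)) : ZMod n) = 0 := by push_cast; exact h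
    exact hzero 2 (by omega) (by omega) this
  · intro h
    have : (((4 : ℕ)) : ZMod n) = 0 := by push_cast; exact h
    exact hzero 4 (by omega) (by omega) this

lemma mem_S (F : Facts n) {x : DihedralGroup n} :
    x ∈ evenS n ↔ x = r 1 ∨ x = r (-1) ∨ x = sr (-1) ∨ x = sr (M n - 1) := by
  have h1 : (r 1 : DihedralGroup n)⁻¹ = r (-1) := rfl
  have h2 : (r 1 * sr 0 : DihedralGroup n) = sr (-1) := by simp
  have h3 : (r (M n + 1) * sr 0 : DihedralGroup n) = sr (M n - 1) := by
    simp only [r_mul_sr, zero_sub, neg_add_rev]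
    congr 1
    linear_combination -F.hMM
  rw [evenS, Set.mem_insert_iff, Set.mem_insert_iff, Set.mem_insert_iff, Set.mem_singleton_iff,
    h1, h2, ← M, h3]

lemma nbr_r (F : Facts n) {i : ZMod n} {y : DihedralGroup n} :
    y * (r i)⁻¹ ∈ evenS n ↔
      y = r (i + 1) ∨ y = r (i - 1) ∨ y = sr (i - 1) ∨ y = sr (i + M n - 1) := by
  rcases y with j | j <;>
    simp only [inv_r, r_mul_r, sr_mul_r, mem_S F, r.injEq, sr.injEq, reduceCtorEq,
      false_or, or_false]
  · constructor <;> rintro (h | h)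
    · exact Or.inl (by linear_combination h)
    · exact Or.inr (by linear_combination h)
    · exact Or.inl (by linear_combination h)
    · exact Or.inr (by linear_combination h)
  · constructor <;> rintro (h | h)
    · exact Or.inl (by linear_combination h)
    · exact Or.inr (by linear_combination h)
    · exact Or.inl (by linear_combination h)
    · exact Or.inr (by linear_combination h)

lemma nbr_sr (F : Facts n) {j : ZMod n} {y : DihedralGroup n} :
    y * (sr j)⁻¹ ∈ evenS n ↔
      y = sr (j - 1) ∨ y = sr (j + 1) ∨ y = r (j + 1) ∨ y = r (j + 1 + M n) := by
  rcases y with i | i <;>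
    simp only [inv_sr, r_mul_sr, sr_mul_sr, mem_S F, r.injEq, sr.injEq, reduceCtorEq,
      false_or, or_false]
  · constructor <;> rintro (h | h)
    · exact Or.inl (by linear_combination -h)
    · exact Or.inr (by linear_combination -h - F.hMM)
    · exact Or.inl (by linear_combination -h)
    · exact Or.inr (by linear_combination -h - F.hMM)
  · constructor <;> rintro (h | h)
    · exact Or.inl (by linear_combination -h)
    · exact Or.inr (by linear_combination -h)
    · exact Or.inl (by linear_combination -h)
    · exact Or.inr (by linear_combination -h)

lemma mem_vertexStab {f : Equiv.Perm (DihedralGroup n)} :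
    f ∈ vertexStab n ↔
      (∀ x y : DihedralGroup n, y * x⁻¹ ∈ evenS n ↔ f y * (f x)⁻¹ ∈ evenS n) ∧ f 1 = 1 := by
  rw [vertexStab, Subgroup.mem_inf, MulAction.mem_stabilizer_iff]
  exact Iff.rfl


lemma nocommon (F : Facts n) {x : DihedralGroup n}
    (h1 : x * (r 1 : DihedralGroup n)⁻¹ ∈ evenS n)
    (h2 : x * (r (-1) : DihedralGroup n)⁻¹ ∈ evenS n) : x = r 0 := by
  rw [nbr_r F] at h1 h2
  rcases h1 with h1 | h1 | h1 | h1 <;> subst h1 <;>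
    simp only [r.injEq, sr.injEq, reduceCtorEq, false_or, or_false] at h2 ⊢ <;>
    rcases h2 with h2 | h2 <;>
    first
      | exact h2
      | ring1
      | exact absurd (show (2:ZMod n) = 0 by linear_combination h2) F.h2
      | exact absurd (show (4:ZMod n) = 0 by linear_combination h2) F.h4
      | exact absurd (show M n = 2 by linear_combination -h2) F.hM2
      | exact absurd (show M n + 2 = 0 by linear_combination h2) F.hM2'


lemma basicS (F : Facts n) :
    (r 1 : DihedralGroup n) ∈ evenS n ∧ (r (-1) : DihedralGroup n) ∈ evenS n ∧
      (sr (-1) : DihedralGroup n) ∈ evenS n ∧ (sr (M n - 1) : DihedralGroup n) ∈ evenS n :=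
  ⟨(mem_S F).mpr (Or.inl rfl), (mem_S F).mpr (Or.inr (Or.inl rfl)),
    (mem_S F).mpr (Or.inr (Or.inr (Or.inl rfl))), (mem_S F).mpr (Or.inr (Or.inr (Or.inr rfl)))⟩

lemma pair_rot (F : Facts n) {f : Equiv.Perm (DihedralGroup n)} (hf : f ∈ vertexStab n) :
    (f (r 1) = r 1 ∧ f (r (-1)) = r (-1)) ∨ (f (r 1) = r (-1) ∧ f (r (-1)) = r 1) := by
  obtain ⟨hC, h1⟩ := mem_vertexStab.mp hf
  have h0 : f (r 0) = r 0 := h1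
  have hS : ∀ y, y ∈ evenS n ↔ f y ∈ evenS n := by
    intro y
    have := hC 1 y
    simpa [h1] using this
  have kill : ∀ w : DihedralGroup n, w ≠ r 0 → w * (f (r 1))⁻¹ ∈ evenS n →
      w * (f (r (-1)))⁻¹ ∈ evenS n → False := by
    intro w hw0 hw1 hw2
    have e1 : f.symm w * (r 1 : DihedralGroup n)⁻¹ ∈ evenS n := by
      have := hC (r 1) (f.symm w)
      rw [Equiv.apply_symm_apply] at this
      exact this.mpr hw1
    have e2 : f.symm w * (r (-1) : DihedralGroup n)⁻¹ ∈ evenS n := by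
      have := hC (r (-1)) (f.symm w)
      rw [Equiv.apply_symm_apply] at this
      exact this.mpr hw2
    have hsymm := nocommon F e1 e2
    apply hw0
    rw [← Equiv.apply_symm_apply f w, hsymm, h0]
  -- witnesses
  have w_sr0_1 : (sr 0 * (r 1)⁻¹ : DihedralGroup n) ∈ evenS n := by
    simp only [inv_r, sr_mul_r]
    rw [mem_S F]
    exact Or.inr (Or.inr (Or.inl (by ring_nf)))
  have w_sr0_s : (sr 0 * (sr (-1))⁻¹ : DihedralGroup n) ∈ evenS n := by
    simp only [inv_sr, sr_mul_sr]
    rw [mem_S F]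
    exact Or.inr (Or.inl (by ring_nf))
  have w_srM_1 : (sr (M n) * (r 1)⁻¹ : DihedralGroup n) ∈ evenS n := by
    simp only [inv_r, sr_mul_r]
    rw [mem_S F]
    exact Or.inr (Or.inr (Or.inr (by ring_nf)))
  have w_srM_s : (sr (M n) * (sr (M n - 1))⁻¹ : DihedralGroup n) ∈ evenS n := by
    simp only [inv_sr, sr_mul_sr]
    rw [mem_S F]
    exact Or.inr (Or.inl (by ring_nf))
  have w_sr2_m1 : (sr (-2) * (r (-1))⁻¹ : DihedralGroup n) ∈ evenS n := by
    simp only [inv_r, sr_mul_r]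
    rw [mem_S F]
    exact Or.inr (Or.inr (Or.inl (by ring_nf)))
  have w_sr2_s : (sr (-2) * (sr (-1))⁻¹ : DihedralGroup n) ∈ evenS n := by
    simp only [inv_sr, sr_mul_sr]
    rw [mem_S F]
    exact Or.inl (by ring_nf)
  have w_srM2_m1 : (sr (M n - 2) * (r (-1))⁻¹ : DihedralGroup n) ∈ evenS n := by
    simp only [inv_r, sr_mul_r]
    rw [mem_S F]
    exact Or.inr (Or.inr (Or.inr (by ring_nf)))
  have w_srM2_s : (sr (M n - 2) * (sr (M n - 1))⁻¹ : DihedralGroup n) ∈ evenS n := by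
    simp only [inv_sr, sr_mul_sr]
    rw [mem_S F]
    exact Or.inl (by ring_nf)
  have w_rM_s1 : (r (M n) * (sr (-1))⁻¹ : DihedralGroup n) ∈ evenS n := by
    simp only [inv_sr, r_mul_sr]
    rw [mem_S F]
    exact Or.inr (Or.inr (Or.inr (congrArg sr (by linear_combination -F.hMM))))
  have w_rM_s2 : (r (M n) * (sr (M n - 1))⁻¹ : DihedralGroup n) ∈ evenS n := by
    simp only [inv_sr, r_mul_sr]
    rw [mem_S F]
    exact Or.inr (Or.inr (Or.inl (by ring_nf)))
  have hsrne : ∀ i : ZMod n, (sr i : DihedralGroup n) ≠ r 0 := by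
    intro i h
    cases h
  have hrMne : (r (M n) : DihedralGroup n) ≠ r 0 := by
    simp only [ne_eq, r.injEq]
    exact F.hM0
  have m1 := (mem_S F).mp ((hS _).mp (basicS F).1)
  have m2 := (mem_S F).mp ((hS _).mp (basicS F).2.1)
  have hne : f (r 1) ≠ f (r (-1)) := by
    intro h
    have h' := f.injective h
    simp only [r.injEq] at h'
    exact F.h2 (by linear_combination h')
  rcases m1 with h1c | h1c | h1c | h1c <;> rcases m2 with h2c | h2c | h2c | h2c
  · exact absurd (h1c.trans h2c.symm) hne
  · exact Or.inl ⟨h1c, h2c⟩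
  · exact absurd (kill (sr 0) (hsrne 0) (by rw [h1c]; exact w_sr0_1)
      (by rw [h2c]; exact w_sr0_s)) (by simp)
  · exact absurd (kill (sr (M n)) (hsrne _) (by rw [h1c]; exact w_srM_1)
      (by rw [h2c]; exact w_srM_s)) (by simp)
  · exact Or.inr ⟨h1c, h2c⟩
  · exact absurd (h1c.trans h2c.symm) hne
  · exact absurd (kill (sr (-2)) (hsrne _) (by rw [h1c]; exact w_sr2_m1)
      (by rw [h2c]; exact w_sr2_s)) (by simp)
  · exact absurd (kill (sr (M n - 2)) (hsrne _) (by rw [h1c]; exact w_srM2_m1)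
      (by rw [h2c]; exact w_srM2_s)) (by simp)
  · exact absurd (kill (sr 0) (hsrne 0) (by rw [h1c]; exact w_sr0_s)
      (by rw [h2c]; exact w_sr0_1)) (by simp)
  · exact absurd (kill (sr (-2)) (hsrne _) (by rw [h1c]; exact w_sr2_s)
      (by rw [h2c]; exact w_sr2_m1)) (by simp)
  · exact absurd (h1c.trans h2c.symm) hne
  · exact absurd (kill (r (M n)) hrMne (by rw [h1c]; exact w_rM_s1)
      (by rw [h2c]; exact w_rM_s2)) (by simp)
  · exact absurd (kill (sr (M n)) (hsrne _) (by rw [h1c]; exact w_srM_s)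
      (by rw [h2c]; exact w_srM_1)) (by simp)
  · exact absurd (kill (sr (M n - 2)) (hsrne _) (by rw [h1c]; exact w_srM2_s)
      (by rw [h2c]; exact w_srM2_m1)) (by simp)
  · exact absurd (kill (r (M n)) hrMne (by rw [h1c]; exact w_rM_s2)
      (by rw [h2c]; exact w_rM_s1)) (by simp)
  · exact absurd (h1c.trans h2c.symm) hne


lemma pair_ref (F : Facts n) {f : Equiv.Perm (DihedralGroup n)} (hf : f ∈ vertexStab n) :
    (f (sr (-1)) = sr (-1) ∧ f (sr (M n - 1)) = sr (M n - 1)) ∨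
      (f (sr (-1)) = sr (M n - 1) ∧ f (sr (M n - 1)) = sr (-1)) := by
  obtain ⟨hC, h1⟩ := mem_vertexStab.mp hf
  have hS : ∀ y, y ∈ evenS n ↔ f y ∈ evenS n := by
    intro y; have := hC 1 y; simpa [h1] using this
  have m3 := (mem_S F).mp ((hS _).mp (basicS F).2.2.1)
  have m4 := (mem_S F).mp ((hS _).mp (basicS F).2.2.2)
  have hrot := pair_rot F hf
  have himg : ∀ c : ZMod n, (c = 1 ∨ c = -1) → ∀ j : ZMod n, f (sr j) ≠ r c := by
    intro c hc j h
    rcases hrot with ⟨a, b⟩ | ⟨a, b⟩ <;> rcases hc with rfl | rfl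
    · exact absurd (f.injective (h.trans a.symm)) (by simp)
    · exact absurd (f.injective (h.trans b.symm)) (by simp)
    · exact absurd (f.injective (h.trans b.symm)) (by simp)
    · exact absurd (f.injective (h.trans a.symm)) (by simp)
  have hne : f (sr (-1)) ≠ f (sr (M n - 1)) := by
    intro h
    have h' := f.injective h
    simp only [sr.injEq] at h'
    exact F.hM0 (by linear_combination -h')
  rcases m3 with h3 | h3 | h3 | h3 <;> rcases m4 with h4 | h4 | h4 | h4 <;>
    first
      | exact absurd h3 (himg 1 (Or.inl rfl) _)
      | exact absurd h3 (himg (-1) (Or.inr rfl) _)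
      | exact absurd h4 (himg 1 (Or.inl rfl) _)
      | exact absurd h4 (himg (-1) (Or.inr rfl) _)
      | exact absurd (h3.trans h4.symm) hne
      | exact Or.inl ⟨h3, h4⟩
      | exact Or.inr ⟨h3, h4⟩

lemma memN {f : Equiv.Perm (DihedralGroup n)}
    (hC : ∀ x y : DihedralGroup n, y * x⁻¹ ∈ evenS n ↔ f y * (f x)⁻¹ ∈ evenS n)
    {v y : DihedralGroup n} (hv : f v = v) :
    y * v⁻¹ ∈ evenS n ↔ f y * v⁻¹ ∈ evenS n := by
  have := hC v y
  rwa [hv] at this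

lemma stepA (F : Facts n) {f : Equiv.Perm (DihedralGroup n)}
    (hC : ∀ x y : DihedralGroup n, y * x⁻¹ ∈ evenS n ↔ f y * (f x)⁻¹ ∈ evenS n)
    {k : ZMod n} (hk0 : f (r k) = r k) (hk1 : f (r (k+1)) = r (k+1))
    (hsk : f (sr k) = sr k) (hsm : f (sr (k + M n - 1)) = sr (k + M n - 1)) :
    f (r (k + 2)) = r (k + 2) := by
  have hmem : f (r (k+2)) * (r (k+1))⁻¹ ∈ evenS n :=
    (memN hC hk1).mp (by rw [nbr_r F]; exact Or.inl (congrArg r (by ring)))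
  rw [nbr_r F] at hmem
  rcases hmem with h | h | h | h
  · exact h.trans (congrArg r (by ring))
  · exfalso
    have := f.injective (h.trans ((congrArg r (show k+1-1 = k by ring)).trans hk0.symm))
    simp only [r.injEq] at this
    exact F.h2 (by linear_combination this)
  · exfalso
    have := f.injective (h.trans ((congrArg sr (show k+1-1 = k by ring)).trans hsk.symm))
    exact absurd this (by simp)
  · exfalso
    have hadj : f (r (k+2)) * (sr (k + M n - 1))⁻¹ ∈ evenS n := by
      rw [h]
      simp only [inv_sr, sr_mul_sr]
      rw [mem_S F]
      exact Or.inr (Or.inl (congrArg r (by ring)))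
    have h2 := (memN hC hsm).mpr hadj
    simp only [inv_sr, r_mul_sr] at h2
    rw [mem_S F] at h2
    rcases h2 with h2 | h2 | h2 | h2
    · exact absurd h2 (by simp)
    · exact absurd h2 (by simp)
    · simp only [sr.injEq] at h2
      exact F.hM2 (by linear_combination h2)
    · simp only [sr.injEq] at h2
      exact F.h2 (by linear_combination -h2)

lemma stepB (F : Facts n) {f : Equiv.Perm (DihedralGroup n)}
    (hC : ∀ x y : DihedralGroup n, y * x⁻¹ ∈ evenS n ↔ f y * (f x)⁻¹ ∈ evenS n)
    {k : ZMod n} (hsk : f (sr k) = sr k) (hk1 : f (r (k+1)) = r (k+1))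
    (hk2 : f (r (k+2)) = r (k+2)) :
    f (sr (k+1)) = sr (k+1) := by
  have hmem : f (sr (k+1)) * (sr k)⁻¹ ∈ evenS n :=
    (memN hC hsk).mp (by rw [nbr_sr F]; exact Or.inr (Or.inl rfl))
  have hadj : f (sr (k+1)) * (r (k+2))⁻¹ ∈ evenS n :=
    (memN hC hk2).mp (by rw [nbr_r F]; exact Or.inr (Or.inr (Or.inl (congrArg sr (by ring)))))
  rw [nbr_sr F] at hmem
  rcases hmem with h | h | h | h
  · exfalso
    rw [h] at hadj
    simp only [inv_r, sr_mul_r] at hadj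
    rw [mem_S F] at hadj
    rcases hadj with h2 | h2 | h2 | h2
    · exact absurd h2 (by simp)
    · exact absurd h2 (by simp)
    · simp only [sr.injEq] at h2
      exact F.h2 (by linear_combination -h2)
    · simp only [sr.injEq] at h2
      exact F.hM2' (by linear_combination -h2)
  · exact h
  · exact absurd (f.injective (h.trans hk1.symm)) (by simp)
  · exfalso
    rw [h] at hadj
    simp only [inv_r, r_mul_r] at hadj
    rw [mem_S F] at hadj
    rcases hadj with h2 | h2 | h2 | h2
    · simp only [r.injEq] at h2
      exact F.hM2 (by linear_combination h2)
    · simp only [r.injEq] at h2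
      exact F.hM0 (by linear_combination h2)
    · exact absurd h2 (by simp)
    · exact absurd h2 (by simp)

lemma stepC (F : Facts n) {f : Equiv.Perm (DihedralGroup n)}
    (hC : ∀ x y : DihedralGroup n, y * x⁻¹ ∈ evenS n ↔ f y * (f x)⁻¹ ∈ evenS n)
    {k : ZMod n} (hsm : f (sr (k + M n)) = sr (k + M n)) (hk1 : f (r (k+1)) = r (k+1))
    (hk2 : f (r (k+2)) = r (k+2)) :
    f (sr (k + M n + 1)) = sr (k + M n + 1) := by
  have hmem : f (sr (k + M n + 1)) * (sr (k + M n))⁻¹ ∈ evenS n :=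
    (memN hC hsm).mp (by rw [nbr_sr F]; exact Or.inr (Or.inl rfl))
  have hadj : f (sr (k + M n + 1)) * (r (k+2))⁻¹ ∈ evenS n :=
    (memN hC hk2).mp (by rw [nbr_r F]; exact Or.inr (Or.inr (Or.inr (congrArg sr (by ring)))))
  rw [nbr_sr F] at hmem
  rcases hmem with h | h | h | h
  · exfalso
    rw [h] at hadj
    simp only [inv_r, sr_mul_r] at hadj
    rw [mem_S F] at hadj
    rcases hadj with h2 | h2 | h2 | h2
    · exact absurd h2 (by simp)
    · exact absurd h2 (by simp)
    · simp only [sr.injEq] at h2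
      exact F.hM2 (by linear_combination h2)
    · simp only [sr.injEq] at h2
      exact F.h2 (by linear_combination -h2)
  · exact h
  · exfalso
    rw [h] at hadj
    simp only [inv_r, r_mul_r] at hadj
    rw [mem_S F] at hadj
    rcases hadj with h2 | h2 | h2 | h2
    · simp only [r.injEq] at h2
      exact F.hM2 (by linear_combination h2)
    · simp only [r.injEq] at h2
      exact F.hM0 (by linear_combination h2)
    · exact absurd h2 (by simp)
    · exact absurd h2 (by simp)
  · have heq : f (sr (k + M n + 1)) = f (r (k+1)) :=
      h.trans ((congrArg r (show k + M n + 1 + M n = k + 1 by linear_combination F.hMM)).trans hk1.symm)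
    exact absurd (f.injective heq) (by simp)

lemma rigid (F : Facts n) {f : Equiv.Perm (DihedralGroup n)} (hf : f ∈ vertexStab n)
    (e1 : f (r 1) = r 1) (e2 : f (r (-1)) = r (-1))
    (e3 : f (sr (-1)) = sr (-1)) (e4 : f (sr (M n - 1)) = sr (M n - 1)) : f = 1 := by
  obtain ⟨hC, h1⟩ := mem_vertexStab.mp hf
  have h0 : f (r 0) = r 0 := h1
  have fixr : ∀ a b : ZMod n, a = b → f (r a) = r a → f (r b) = r b := by
    intro a b hab h; rwa [hab] at h
  have fixsr : ∀ a b : ZMod n, a = b → f (sr a) = sr a → f (sr b) = sr b := by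
    intro a b hab h; rwa [hab] at h
  set Q : ZMod n → Prop := fun k =>
    f (r k) = r k ∧ f (r (k+1)) = r (k+1) ∧ f (sr (k-1)) = sr (k-1) ∧ f (sr k) = sr k ∧
      f (sr (k + M n - 1)) = sr (k + M n - 1) ∧ f (sr (k + M n)) = sr (k + M n) with hQdef
  have hQ0 : Q 0 := by
    refine ⟨h0, fixr _ _ (by ring) e1, fixsr _ _ (by ring) e3, ?_, fixsr _ _ (by ring) e4, ?_⟩
    · have := stepB F hC (k := -1) e3 (fixr _ _ (by ring) h0) (fixr _ _ (by ring) e1)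
      exact fixsr _ _ (by ring) this
    · have := stepC F hC (k := -1) (fixsr _ _ (by ring) e4)
        (fixr _ _ (by ring) h0) (fixr _ _ (by ring) e1)
      exact fixsr _ _ (by ring) this
  have hstep : ∀ k, Q k → Q (k+1) := by
    intro k hk
    obtain ⟨q1, q2, q3, q4, q5, q6⟩ := hk
    have hr2 : f (r (k+2)) = r (k+2) := stepA F hC q1 q2 q4 q5
    exact ⟨q2, fixr _ _ (by ring) hr2, fixsr _ _ (by ring) q4, stepB F hC q4 q2 hr2,
      fixsr _ _ (by ring) q6, fixsr _ _ (by ring) (stepC F hC q6 q2 hr2)⟩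
  have hnat : ∀ j : ℕ, Q ((j : ℕ) : ZMod n) := by
    intro j
    induction j with
    | zero => simpa using hQ0
    | succ j ih =>
      have := hstep _ ih
      rwa [show (((j+1 : ℕ)) : ZMod n) = ((j : ℕ) : ZMod n) + 1 by push_cast; ring] 
  haveI : NeZero n := ⟨F.hNZ⟩
  have hall : ∀ k : ZMod n, Q k := by
    intro k
    obtain ⟨j, rfl⟩ := ZMod.natCast_rightInverse.surjective k
    exact hnat j
  ext x
  rcases x with i | j
  · simpa using (hall i).1
  · have := (hall (j+1)).2.2.1
    simpa using fixsr _ _ (show j+1-1 = j by ring) this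


lemma phi_sr (F : Facts n) {φ : MulAut (DihedralGroup n)}
    (hφs : ∀ j : ZMod n, φ (r j * sr 0) = r (j + ((n / 2 : ℕ) : ZMod n)) * sr 0)
    (j : ZMod n) : φ (sr j) = sr (j + M n) := by
  have h := hφs (-j)
  rw [show (r (-j) * sr 0 : DihedralGroup n) = sr j by simp] at h
  rw [h]
  simp only [r_mul_sr]
  refine congrArg sr ?_
  have hM : ((n / 2 : ℕ) : ZMod n) = M n := rfl
  rw [hM]
  linear_combination -F.hMM

lemma psi_sr {ψ : MulAut (DihedralGroup n)}
    (hψs : ∀ j : ZMod n, ψ (r j * sr 0) = r (-j + 2) * sr 0)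
    (j : ZMod n) : ψ (sr j) = sr (-j - 2) := by
  have h := hψs (-j)
  rw [show (r (-j) * sr 0 : DihedralGroup n) = sr j by simp] at h
  rw [h]
  simp only [r_mul_sr]
  exact congrArg sr (by ring)

lemma phi_iff (F : Facts n) {φ : MulAut (DihedralGroup n)}
    (hφr : ∀ i : ZMod n, φ (r i) = r i)
    (hφs : ∀ j : ZMod n, φ (r j * sr 0) = r (j + ((n / 2 : ℕ) : ZMod n)) * sr 0) :
    ∀ x : DihedralGroup n, x ∈ evenS n ↔ φ x ∈ evenS n := by
  rintro (i | j)
  · rw [hφr i]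
  · rw [phi_sr F hφs j, mem_S F, mem_S F]
    simp only [sr.injEq, reduceCtorEq, false_or]
    constructor
    · rintro (h | h)
      · exact Or.inr (by linear_combination h)
      · exact Or.inl (by linear_combination h + F.hMM)
    · rintro (h | h)
      · exact Or.inr (by linear_combination h - F.hMM)
      · exact Or.inl (by linear_combination h)

lemma psi_iff (F : Facts n) {ψ : MulAut (DihedralGroup n)}
    (hψr : ∀ i : ZMod n, ψ (r i) = r (-i))
    (hψs : ∀ j : ZMod n, ψ (r j * sr 0) = r (-j + 2) * sr 0) :
    ∀ x : DihedralGroup n, x ∈ evenS n ↔ ψ x ∈ evenS n := by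
  rintro (i | j)
  · rw [hψr i, mem_S F, mem_S F]
    simp only [r.injEq, reduceCtorEq, or_false]
    constructor
    · rintro (h | h)
      · exact Or.inr (by linear_combination -h)
      · exact Or.inl (by linear_combination -h)
    · rintro (h | h)
      · exact Or.inr (by linear_combination -h)
      · exact Or.inl (by linear_combination -h)
  · rw [psi_sr hψs j, mem_S F, mem_S F]
    simp only [sr.injEq, reduceCtorEq, false_or]
    constructor
    · rintro (h | h)
      · exact Or.inl (by linear_combination -h)
      · exact Or.inr (by linear_combination -h - F.hMM)
    · rintro (h | h)
      · exact Or.inl (by linear_combination -h)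
      · exact Or.inr (by linear_combination -h - F.hMM)

lemma aut_mem_stab {σ : MulAut (DihedralGroup n)}
    (hσ : ∀ x, x ∈ evenS n ↔ σ x ∈ evenS n) :
    MulAut.toPerm (DihedralGroup n) σ ∈ vertexStab n := by
  rw [mem_vertexStab]
  constructor
  · intro x y
    show y * x⁻¹ ∈ evenS n ↔ σ y * (σ x)⁻¹ ∈ evenS n
    rw [show σ y * (σ x)⁻¹ = σ (y * x⁻¹) by rw [map_mul, map_inv]]
    exact hσ _
  · show σ 1 = 1
    exact map_one σ

lemma aut_image {σ : MulAut (DihedralGroup n)}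
    (hσ : ∀ x, x ∈ evenS n ↔ σ x ∈ evenS n) :
    ⇑σ '' evenS n = evenS n := by
  ext y
  constructor
  · rintro ⟨x, hx, rfl⟩
    exact (hσ x).mp hx
  · intro hy
    exact ⟨σ.symm y, (hσ _).mpr (by rwa [MulEquiv.apply_symm_apply]),
      MulEquiv.apply_symm_apply σ y⟩

lemma mem_of_aut {f : Equiv.Perm (DihedralGroup n)} {σ : MulAut (DihedralGroup n)}
    (him : ⇑σ '' evenS n = evenS n) (hfx : ∀ x, f x = σ x) : f ∈ vertexStab n := by
  rw [mem_vertexStab]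
  have hiff : ∀ x, x ∈ evenS n ↔ σ x ∈ evenS n := by
    intro x
    constructor
    · intro hx; rw [← him]; exact ⟨x, hx, rfl⟩
    · intro hx
      rw [← him] at hx
      obtain ⟨z, hz, he⟩ := hx
      rwa [← σ.injective he]
  constructor
  · intro x y
    rw [hfx, hfx, show σ y * (σ x)⁻¹ = σ (y * x⁻¹) by rw [map_mul, map_inv]]
    exact hiff _
  · rw [hfx]; exact map_one σ


lemma stab_classify (F : Facts n) {φ ψ : MulAut (DihedralGroup n)}
    (hφr : ∀ i : ZMod n, φ (r i) = r i)
    (hφs : ∀ j : ZMod n, φ (r j * sr 0) = r (j + ((n / 2 : ℕ) : ZMod n)) * sr 0)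
    (hψr : ∀ i : ZMod n, ψ (r i) = r (-i))
    (hψs : ∀ j : ZMod n, ψ (r j * sr 0) = r (-j + 2) * sr 0)
    (f : Equiv.Perm (DihedralGroup n)) :
    f ∈ vertexStab n ↔
      (f = 1 ∨ f = MulAut.toPerm (DihedralGroup n) φ ∨ f = MulAut.toPerm (DihedralGroup n) ψ ∨
        f = MulAut.toPerm (DihedralGroup n) φ * MulAut.toPerm (DihedralGroup n) ψ) := by
  have hφiff := phi_iff F hφr hφs
  have hψiff := psi_iff F hψr hψs
  have φv3 : φ (sr (-1)) = sr (M n - 1) := by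
    rw [phi_sr F hφs]; exact congrArg sr (by ring)
  have φv4 : φ (sr (M n - 1)) = sr (-1) := by
    rw [phi_sr F hφs]; exact congrArg sr (by linear_combination F.hMM)
  have ψv2 : ψ (r (-1)) = r 1 := by rw [hψr]; exact congrArg r (by ring)
  have ψv3 : ψ (sr (-1)) = sr (-1) := by rw [psi_sr hψs]; exact congrArg sr (by ring)
  have ψv4 : ψ (sr (M n - 1)) = sr (M n - 1) := by
    rw [psi_sr hψs]; exact congrArg sr (by linear_combination -F.hMM)
  constructor
  · intro hf
    rcases pair_rot F hf with ⟨a1, a2⟩ | ⟨a1, a2⟩ <;>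
      rcases pair_ref F hf with ⟨b1, b2⟩ | ⟨b1, b2⟩
    · exact Or.inl (rigid F hf a1 a2 b1 b2)
    · refine Or.inr (Or.inl ?_)
      set g := MulAut.toPerm (DihedralGroup n) φ with hg
      have hginv : ∀ x y : DihedralGroup n, g x = y → g⁻¹ y = x := by
        intro x y h; rw [← h]; exact g.symm_apply_apply x
      have hmem : g⁻¹ * f ∈ vertexStab n := mul_mem (inv_mem (aut_mem_stab hφiff)) hf
      have c1 : (g⁻¹ * f) (r 1) = r 1 := by
        rw [Equiv.Perm.mul_apply, a1]; exact hginv _ _ (hφr 1)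
      have c2 : (g⁻¹ * f) (r (-1)) = r (-1) := by
        rw [Equiv.Perm.mul_apply, a2]; exact hginv _ _ (hφr (-1))
      have c3 : (g⁻¹ * f) (sr (-1)) = sr (-1) := by
        rw [Equiv.Perm.mul_apply, b1]; exact hginv _ _ φv3
      have c4 : (g⁻¹ * f) (sr (M n - 1)) = sr (M n - 1) := by
        rw [Equiv.Perm.mul_apply, b2]; exact hginv _ _ φv4
      exact (inv_mul_eq_one.mp (rigid F hmem c1 c2 c3 c4)).symm
    · refine Or.inr (Or.inr (Or.inl ?_))
      set g := MulAut.toPerm (DihedralGroup n) ψ with hg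
      have hginv : ∀ x y : DihedralGroup n, g x = y → g⁻¹ y = x := by
        intro x y h; rw [← h]; exact g.symm_apply_apply x
      have hmem : g⁻¹ * f ∈ vertexStab n := mul_mem (inv_mem (aut_mem_stab hψiff)) hf
      have c1 : (g⁻¹ * f) (r 1) = r 1 := by
        rw [Equiv.Perm.mul_apply, a1]; exact hginv _ _ (hψr 1)
      have c2 : (g⁻¹ * f) (r (-1)) = r (-1) := by
        rw [Equiv.Perm.mul_apply, a2]; exact hginv _ _ ψv2
      have c3 : (g⁻¹ * f) (sr (-1)) = sr (-1) := by
        rw [Equiv.Perm.mul_apply, b1]; exact hginv _ _ ψv3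
      have c4 : (g⁻¹ * f) (sr (M n - 1)) = sr (M n - 1) := by
        rw [Equiv.Perm.mul_apply, b2]; exact hginv _ _ ψv4
      exact (inv_mul_eq_one.mp (rigid F hmem c1 c2 c3 c4)).symm
    · refine Or.inr (Or.inr (Or.inr ?_))
      set g := MulAut.toPerm (DihedralGroup n) φ * MulAut.toPerm (DihedralGroup n) ψ with hg
      have hginv : ∀ x y : DihedralGroup n, g x = y → g⁻¹ y = x := by
        intro x y h; rw [← h]; exact g.symm_apply_apply x
      have hmem : g⁻¹ * f ∈ vertexStab n :=
        mul_mem (inv_mem (mul_mem (aut_mem_stab hφiff) (aut_mem_stab hψiff))) hf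
      have gv1 : g (r 1) = r (-1) := by
        show φ (ψ (r 1)) = r (-1)
        rw [hψr 1]; exact hφr (-1)
      have gv2 : g (r (-1)) = r 1 := by
        show φ (ψ (r (-1))) = r 1
        rw [ψv2]; exact hφr 1
      have gv3 : g (sr (-1)) = sr (M n - 1) := by
        show φ (ψ (sr (-1))) = sr (M n - 1)
        rw [ψv3]; exact φv3
      have gv4 : g (sr (M n - 1)) = sr (-1) := by
        show φ (ψ (sr (M n - 1))) = sr (-1)
        rw [ψv4]; exact φv4
      have c1 : (g⁻¹ * f) (r 1) = r 1 := by
        rw [Equiv.Perm.mul_apply, a1]; exact hginv _ _ gv1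
      have c2 : (g⁻¹ * f) (r (-1)) = r (-1) := by
        rw [Equiv.Perm.mul_apply, a2]; exact hginv _ _ gv2
      have c3 : (g⁻¹ * f) (sr (-1)) = sr (-1) := by
        rw [Equiv.Perm.mul_apply, b1]; exact hginv _ _ gv3
      have c4 : (g⁻¹ * f) (sr (M n - 1)) = sr (M n - 1) := by
        rw [Equiv.Perm.mul_apply, b2]; exact hginv _ _ gv4
      exact (inv_mul_eq_one.mp (rigid F hmem c1 c2 c3 c4)).symm
  · rintro (rfl | rfl | rfl | rfl)
    · exact one_mem _
    · exact aut_mem_stab hφiff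
    · exact aut_mem_stab hψiff
    · exact mul_mem (aut_mem_stab hφiff) (aut_mem_stab hψiff)

lemma stab_exists (F : Facts n) {φ ψ : MulAut (DihedralGroup n)}
    (hφr : ∀ i : ZMod n, φ (r i) = r i)
    (hφs : ∀ j : ZMod n, φ (r j * sr 0) = r (j + ((n / 2 : ℕ) : ZMod n)) * sr 0)
    (hψr : ∀ i : ZMod n, ψ (r i) = r (-i))
    (hψs : ∀ j : ZMod n, ψ (r j * sr 0) = r (-j + 2) * sr 0)
    (f : Equiv.Perm (DihedralGroup n)) (hf : f ∈ vertexStab n) :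
    ∃ σ : MulAut (DihedralGroup n), ⇑σ '' evenS n = evenS n ∧ ∀ x, f x = σ x := by
  have hφiff := phi_iff F hφr hφs
  have hψiff := psi_iff F hψr hψs
  have hφψiff : ∀ x, x ∈ evenS n ↔ (φ * ψ) x ∈ evenS n := by
    intro x
    rw [MulAut.mul_apply]
    exact (hψiff x).trans (hφiff _)
  rcases (stab_classify F hφr hφs hψr hψs f).mp hf with rfl | rfl | rfl | rfl
  · exact ⟨1, aut_image (fun x => Iff.rfl), fun x => rfl⟩
  · exact ⟨φ, aut_image hφiff, fun x => rfl⟩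
  · exact ⟨ψ, aut_image hψiff, fun x => rfl⟩
  · exact ⟨φ * ψ, aut_image hφψiff, fun x => rfl⟩

end CDAux

open CDAux

/-- Let `n ≥ 6` be even, `S = {a, a⁻¹, ab, a^{n/2+1}b}`, `Γ = Cay(D_{2n}, S)` and
`A = Aut(Γ)`. Then the stabilizer `A₁` of the identity vertex acts faithfully on
`S`, has order `4`, and equals `Aut(D_{2n}, S) = ⟨σ_{1,n/2}, σ_{-1,2}⟩`;
consequently `R(D_{2n})` is normal in `Aut(Γ)`. -/
theorem cayley_dihedral_even_normal (n : ℕ) (hn : 6 ≤ n) (heven : Even n)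
    (φ ψ : MulAut (DihedralGroup n))
    (hφr : ∀ i : ZMod n, φ (DihedralGroup.r i) = DihedralGroup.r i)
    (hφs : ∀ j : ZMod n, φ (DihedralGroup.r j * DihedralGroup.sr 0) =
      DihedralGroup.r (j + ((n / 2 : ℕ) : ZMod n)) * DihedralGroup.sr 0)
    (hψr : ∀ i : ZMod n, ψ (DihedralGroup.r i) = DihedralGroup.r (-i))
    (hψs : ∀ j : ZMod n, ψ (DihedralGroup.r j * DihedralGroup.sr 0) =
      DihedralGroup.r (-j + 2) * DihedralGroup.sr 0) :
    (∀ f ∈ vertexStab n, (∀ s ∈ evenS n, f s = s) → f = 1) ∧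
    Nat.card (vertexStab n) = 4 ∧
    (∀ f : Equiv.Perm (DihedralGroup n), f ∈ vertexStab n ↔
      ∃ σ : MulAut (DihedralGroup n), ⇑σ '' evenS n = evenS n ∧ ∀ x, f x = σ x) ∧
    (∀ f : Equiv.Perm (DihedralGroup n), f ∈ vertexStab n ↔
      f ∈ Subgroup.closure {MulAut.toPerm (DihedralGroup n) φ, MulAut.toPerm (DihedralGroup n) ψ}) ∧
    (∀ f ∈ cayleyAut (DihedralGroup n) (evenS n), ∀ p ∈ rightRegRep (DihedralGroup n),
      f * p * f⁻¹ ∈ rightRegRep (DihedralGroup n)) := by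
  have F : Facts n := facts hn heven
  have hφiff := phi_iff F hφr hφs
  have hψiff := psi_iff F hψr hψs
  have φv3 : φ (sr (-1)) = sr (M n - 1) := by
    rw [phi_sr F hφs]; exact congrArg sr (by ring)
  have ψv3 : ψ (sr (-1)) = sr (-1) := by rw [psi_sr hψs]; exact congrArg sr (by ring)
  refine ⟨?_, ?_, ?_, ?_, ?_⟩
  · -- faithfulness
    intro f hf hfix
    exact rigid F hf (hfix _ (basicS F).1) (hfix _ (basicS F).2.1)
      (hfix _ (basicS F).2.2.1) (hfix _ (basicS F).2.2.2)
  · -- cardinality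
    set P1 := MulAut.toPerm (DihedralGroup n) φ with hP1
    set P2 := MulAut.toPerm (DihedralGroup n) ψ with hP2
    have hset : (vertexStab n : Set (Equiv.Perm (DihedralGroup n))) = {1, P1, P2, P1 * P2} := by
      ext f
      rw [SetLike.mem_coe, stab_classify F hφr hφs hψr hψs f]
      simp only [Set.mem_insert_iff, Set.mem_singleton_iff]
      exact Iff.rfl
    have ne10 : P1 ≠ 1 := by
      intro h
      have h2 : φ (sr (-1)) = sr (-1) := Equiv.ext_iff.mp h (sr (-1))
      have h3 := φv3.symm.trans h2
      simp only [sr.injEq] at h3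
      exact F.hM0 (by linear_combination h3)
    have ne20 : P2 ≠ 1 := by
      intro h
      have h2 : ψ (r 1) = r 1 := Equiv.ext_iff.mp h (r 1)
      have h3 := (hψr 1).symm.trans h2
      simp only [r.injEq] at h3
      exact F.h2 (by linear_combination -h3)
    have ne30 : P1 * P2 ≠ 1 := by
      intro h
      have h2 : φ (ψ (r 1)) = r 1 := Equiv.ext_iff.mp h (r 1)
      rw [hψr 1, hφr (-1)] at h2
      simp only [r.injEq] at h2
      exact F.h2 (by linear_combination -h2)
    have ne12 : P1 ≠ P2 := by
      intro h
      have h2 : φ (r 1) = ψ (r 1) := Equiv.ext_iff.mp h (r 1)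
      rw [hψr 1, hφr 1] at h2
      simp only [r.injEq] at h2
      exact F.h2 (by linear_combination h2)
    have ne13 : P1 ≠ P1 * P2 := by
      intro h
      have h2 : φ (r 1) = φ (ψ (r 1)) := Equiv.ext_iff.mp h (r 1)
      rw [hψr 1, hφr 1, hφr (-1)] at h2
      simp only [r.injEq] at h2
      exact F.h2 (by linear_combination h2)
    have ne23 : P2 ≠ P1 * P2 := by
      intro h
      have h2 : ψ (sr (-1)) = φ (ψ (sr (-1))) := Equiv.ext_iff.mp h (sr (-1))
      rw [ψv3, φv3] at h2
      simp only [sr.injEq] at h2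
      exact F.hM0 (by linear_combination -h2)
    have hcard : Nat.card (vertexStab n) = Nat.card ({1, P1, P2, P1 * P2} : Set _) :=
      Nat.card_congr (Equiv.setCongr hset)
    rw [hcard, Nat.card_coe_set_eq]
    rw [Set.ncard_insert_of_notMem (by
      simp only [Set.mem_insert_iff, Set.mem_singleton_iff]
      push_neg
      exact ⟨Ne.symm ne10, Ne.symm ne20, Ne.symm ne30⟩)
      (((Set.finite_singleton _).insert _).insert _)]
    rw [Set.ncard_insert_of_notMem (by
      simp only [Set.mem_insert_iff, Set.mem_singleton_iff]
      push_neg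
      exact ⟨ne12, ne13⟩) ((Set.finite_singleton _).insert _)]
    rw [Set.ncard_insert_of_notMem (by
      simp only [Set.mem_singleton_iff]
      exact ne23) (Set.finite_singleton _)]
    rw [Set.ncard_singleton]
  · -- description by automorphisms
    intro f
    constructor
    · exact stab_exists F hφr hφs hψr hψs f
    · rintro ⟨σ, him, hfx⟩
      exact mem_of_aut him hfx
  · -- closure description
    intro f
    constructor
    · intro hf
      rcases (stab_classify F hφr hφs hψr hψs f).mp hf with rfl | rfl | rfl | rfl
      · exact one_mem _
      · exact Subgroup.subset_closure (by simp)
      · exact Subgroup.subset_closure (by simp)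
      · exact mul_mem (Subgroup.subset_closure (by simp)) (Subgroup.subset_closure (by simp))
    · intro hf
      refine (Subgroup.closure_le (vertexStab n)).mpr ?_ hf
      rintro x hx
      simp only [Set.mem_insert_iff, Set.mem_singleton_iff] at hx
      rcases hx with rfl | rfl
      · exact aut_mem_stab hφiff
      · exact aut_mem_stab hψiff
  · -- normality of R(G)
    intro f hfC p hp
    obtain ⟨g, rfl⟩ := hp
    set c := f 1 with hc
    set u : Equiv.Perm (DihedralGroup n) := rightRegHom (DihedralGroup n) c * f with hu
    have hρmem : ∀ d : DihedralGroup n,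
        rightRegHom (DihedralGroup n) d ∈ cayleyAut (DihedralGroup n) (evenS n) := by
      intro d x y
      show y * x⁻¹ ∈ evenS n ↔ (y * d⁻¹) * (x * d⁻¹)⁻¹ ∈ evenS n
      rw [show (y * d⁻¹) * (x * d⁻¹)⁻¹ = y * x⁻¹ by group]
    have humem : u ∈ vertexStab n := by
      rw [mem_vertexStab]
      refine ⟨mul_mem (hρmem c) hfC, ?_⟩
      show f 1 * c⁻¹ = 1
      rw [hc]
      group
    obtain ⟨σ, -, hσx⟩ := stab_exists F hφr hφs hψr hψs u humem
    have huσ : u = MulAut.toPerm (DihedralGroup n) σ := Equiv.ext hσx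
    have hf2 : f = (rightRegHom (DihedralGroup n) c)⁻¹ * MulAut.toPerm (DihedralGroup n) σ := by
      rw [← huσ, hu]
      group
    have h3 : MulAut.toPerm (DihedralGroup n) σ * rightRegHom (DihedralGroup n) g *
        (MulAut.toPerm (DihedralGroup n) σ)⁻¹ = rightRegHom (DihedralGroup n) (σ g) := by
      have hcomm : MulAut.toPerm (DihedralGroup n) σ * rightRegHom (DihedralGroup n) g =
          rightRegHom (DihedralGroup n) (σ g) * MulAut.toPerm (DihedralGroup n) σ := by
        ext x
        show σ (x * g⁻¹) = σ x * (σ g)⁻¹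
        rw [map_mul, map_inv]
      rw [hcomm]
      group
    have h4 : f * rightRegHom (DihedralGroup n) g * f⁻¹ =
        (rightRegHom (DihedralGroup n) c)⁻¹ * rightRegHom (DihedralGroup n) (σ g) *
          rightRegHom (DihedralGroup n) c := by
      rw [hf2, ← h3]
      group
    rw [h4]
    exact mul_mem (mul_mem (inv_mem ⟨c, rfl⟩) ⟨σ g, rfl⟩) ⟨c, rfl⟩
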